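/- Suppose T is a Hurwitz tree for a lift of a (Z/2)^3-cover of type (4,4,4), with the property that every subtree corresponding to a Klein-four subcover of type (4,4) has branch partition (1,1,1,1,1,1), (3,3), or (2,2,2), that every Z/2-subcover lift with non-equidistant geometry has all branches of even size, and that the branch cycle criterion holds (the 7 branch points are in bijection with the 7 nontrivial elements of (Z/2)^3 as inertia generators, and two generating subcovers of conductor 4 share exactly 2 branch points while all three share exactly 1). Then T has branch partition (1,1,1,1,1,1,1), i.e., the 7 branch points are equidistant. -/

import Mathlib

open scoped Classical

namespace Stmt17

/-- The group `(ℤ/2)³`; its 7 nontrivial elements are the branch points of a lift of a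
`(ℤ/2)³`-cover of type `(4,4,4)`, identified with the generators of their inertia
groups via the branch cycle criterion (so that the branch locus of the `ℤ/2`-subcover
corresponding to an index-2 subgroup `G'` is the set of nontrivial elements outside
`G'`, the branch locus of the Klein-four subcover corresponding to an order-2
subgroup `H` is the set of nontrivial elements outside `H`, two generating subcovers
share exactly 2 branch points, and all three share exactly 1). -/
abbrev G : Type := ZMod 2 × ZMod 2 × ZMod 2

/-- `br : G → ℕ` assigns to each branch point the branch of the Hurwitz tree it lies
on; `classSizes br S` is the multiset of branch sizes of the points of `S`. -/
noncomputable def classSizes (br : G → ℕ) (S : Finset G) : Multiset ℕ :=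
  (S.image br).val.map fun j => (S.filter fun g => br g = j).card

set_option synthInstance.maxSize 1024
set_option maxHeartbeats 1000000
set_option linter.unnecessarySeqFocus false

/-! ### Subgroup gadgets -/

private lemma sub4_add : ∀ x y a b : G,
    (a = 0 ∨ a = x ∨ a = y ∨ a = x + y) → (b = 0 ∨ b = x ∨ b = y ∨ b = x + y) →
    (a + b = 0 ∨ a + b = x ∨ a + b = y ∨ a + b = x + y) := by decide

private lemma sub4_neg : ∀ x y a : G,
    (a = 0 ∨ a = x ∨ a = y ∨ a = x + y) → (-a = 0 ∨ -a = x ∨ -a = y ∨ -a = x + y) := by decide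

/-- The subgroup `{0, x, y, x+y}` of `G` (order 4 when `0,x,y,x+y` are distinct). -/
def sub4 (x y : G) : AddSubgroup G where
  carrier := {g : G | g = 0 ∨ g = x ∨ g = y ∨ g = x + y}
  zero_mem' := Or.inl rfl
  add_mem' := fun ha hb => sub4_add _ _ _ _ ha hb
  neg_mem' := fun ha => sub4_neg _ _ _ ha

private lemma sub2_add : ∀ x a b : G,
    (a = 0 ∨ a = x) → (b = 0 ∨ b = x) → (a + b = 0 ∨ a + b = x) := by decide
private lemma sub2_neg : ∀ x a : G, (a = 0 ∨ a = x) → (-a = 0 ∨ -a = x) := by decide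

/-- The subgroup `{0, x}` of `G` (order 2 when `x ≠ 0`). -/
def sub2 (x : G) : AddSubgroup G where
  carrier := {g : G | g = 0 ∨ g = x}
  zero_mem' := Or.inl rfl
  add_mem' := fun ha hb => sub2_add _ _ _ ha hb
  neg_mem' := fun ha => sub2_neg _ _ ha

lemma mem_sub4 {x y g : G} : g ∈ sub4 x y ↔ (g = 0 ∨ g = x ∨ g = y ∨ g = x + y) := Iff.rfl
lemma mem_sub2 {x g : G} : g ∈ sub2 x ↔ (g = 0 ∨ g = x) := Iff.rfl

private lemma add_ne : ∀ x y : G, x ≠ 0 → y ≠ 0 → x ≠ y →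
    (x + y ≠ 0 ∧ x ≠ x + y ∧ y ≠ x + y ∧ (0:G) ≠ x ∧ (0:G) ≠ y) := by decide

lemma card_sub4 {x y : G} (hx : x ≠ 0) (hy : y ≠ 0) (hxy : x ≠ y) :
    Nat.card (sub4 x y) = 4 := by
  obtain ⟨h1, h2, h3, h4, h5⟩ := add_ne x y hx hy hxy
  have hset : (sub4 x y : Set G) = {0, x, y, x + y} := by
    ext g
    simp [sub4, Set.mem_insert_iff]
  have : Nat.card (sub4 x y) = Nat.card ({0, x, y, x + y} : Set G) :=
    Nat.card_congr (Equiv.setCongr hset)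
  rw [this, Nat.card_coe_set_eq,
    Set.ncard_insert_of_notMem (by simp [h4, h5, h1.symm]),
    Set.ncard_insert_of_notMem (by simp [hxy, h2]),
    Set.ncard_pair h3]

lemma card_sub2 {x : G} (hx : x ≠ 0) : Nat.card (sub2 x) = 2 := by
  have hset : (sub2 x : Set G) = {0, x} := by
    ext g; simp [sub2, Set.mem_insert_iff]
  have : Nat.card (sub2 x) = Nat.card ({0, x} : Set G) :=
    Nat.card_congr (Equiv.setCongr hset)
  rw [this, Nat.card_coe_set_eq, Set.ncard_pair (Ne.symm hx)]

/-! ### Generic facts about `classSizes` -/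

lemma mem_classSizes (br : G → ℕ) (S : Finset G) {x : G} (hx : x ∈ S) :
    (S.filter fun g => br g = br x).card ∈ classSizes br S := by
  unfold classSizes
  exact Multiset.mem_map.2 ⟨br x, (by rw [Finset.mem_val]; exact Finset.mem_image_of_mem br hx), rfl⟩

/-- No branch of a Klein-four subtree can contain 4 of its branch points. -/
lemma no_big_class (br : G → ℕ) (S : Finset G)
    (hK : classSizes br S = ({1,1,1,1,1,1} : Multiset ℕ) ∨
      classSizes br S = ({3,3} : Multiset ℕ) ∨ classSizes br S = ({2,2,2} : Multiset ℕ))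
    (w1 w2 w3 w4 : G) (h1 : w1 ∈ S) (h2 : w2 ∈ S) (h3 : w3 ∈ S) (h4 : w4 ∈ S)
    (d12 : w1 ≠ w2) (d13 : w1 ≠ w3) (d14 : w1 ≠ w4) (d23 : w2 ≠ w3) (d24 : w2 ≠ w4)
    (d34 : w3 ≠ w4)
    (e2 : br w2 = br w1) (e3 : br w3 = br w1) (e4 : br w4 = br w1) : False := by
  have hmem := mem_classSizes br S h1
  have hsub : ({w1, w2, w3, w4} : Finset G) ⊆ S.filter (fun g => br g = br w1) := by
    intro g hg
    simp only [Finset.mem_insert, Finset.mem_singleton] at hg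
    rcases hg with rfl | rfl | rfl | rfl <;> rw [Finset.mem_filter] <;>
      exact ⟨by assumption, by simp [e2, e3, e4]⟩
  have hc4 : ({w1, w2, w3, w4} : Finset G).card = 4 := by
    rw [Finset.card_insert_of_notMem (by simp [d12, d13, d14]),
      Finset.card_insert_of_notMem (by simp [d23, d24]),
      Finset.card_insert_of_notMem (by simp [d34]), Finset.card_singleton]
  have h4le : 4 ≤ (S.filter (fun g => br g = br w1)).card :=
    hc4 ▸ Finset.card_le_card hsub
  rcases hK with h | h | h <;> rw [h] at hmem <;> simp at hmem <;> omega

/-- A Klein-four subtree cannot have both a singleton branch and a branch with two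
points. -/
lemma one_and_two (br : G → ℕ) (S : Finset G)
    (hK : classSizes br S = ({1,1,1,1,1,1} : Multiset ℕ) ∨
      classSizes br S = ({3,3} : Multiset ℕ) ∨ classSizes br S = ({2,2,2} : Multiset ℕ))
    (x : G) (hx : x ∈ S)
    (hfib : S.filter (fun g => br g = br x) = {x})
    (u v : G) (hu : u ∈ S) (hv : v ∈ S) (huv : u ≠ v) (hbruv : br v = br u) : False := by
  have h1 := mem_classSizes br S hx
  rw [hfib, Finset.card_singleton] at h1
  have h2 := mem_classSizes br S hu
  have hsub : ({u, v} : Finset G) ⊆ S.filter (fun g => br g = br u) := by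
    intro g hg
    simp only [Finset.mem_insert, Finset.mem_singleton] at hg
    rcases hg with rfl | rfl <;> rw [Finset.mem_filter] <;> exact ⟨by assumption, by simp [hbruv]⟩
  have h2le : 2 ≤ (S.filter (fun g => br g = br u)).card :=
    (Finset.card_pair huv) ▸ Finset.card_le_card hsub
  rcases hK with h | h | h <;> rw [h] at h1 h2 <;> simp at h1 h2 <;> omega

/-- Lemma 5.6 consequence: if a `ℤ/2`-subcover has 4 branch points `{p,q,x,y}` with
`p, q` on the same branch, then `x, y` are also on the same branch. -/
lemma pairD (br : G → ℕ) (H : AddSubgroup G)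
    (hZ : (∀ s ∈ classSizes br (Finset.univ.filter fun g => g ∉ H), s = 1)
        ∨ (∀ s ∈ classSizes br (Finset.univ.filter fun g => g ∉ H), Even s))
    (p q x y : G)
    (hS : ∀ g : G, g ∉ H ↔ (g = p ∨ g = q ∨ g = x ∨ g = y))
    (hpq : br q = br p)
    (dpq : p ≠ q) (dpx : p ≠ x) (dqx : q ≠ x) :
    br x = br y := by
  set S := Finset.univ.filter (fun g : G => g ∉ H) with hSdef
  have hmemS : ∀ g : G, g ∈ S ↔ (g = p ∨ g = q ∨ g = x ∨ g = y) := by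
    intro g
    rw [hSdef, Finset.mem_filter]
    simp [hS g]
  have hp : p ∈ S := (hmemS p).2 (Or.inl rfl)
  have hq : q ∈ S := (hmemS q).2 (Or.inr (Or.inl rfl))
  have hxS : x ∈ S := (hmemS x).2 (Or.inr (Or.inr (Or.inl rfl)))
  by_contra hxy
  rcases hZ with h1 | h2
  · have hm := mem_classSizes br S hp
    have hsub : ({p, q} : Finset G) ⊆ S.filter (fun g => br g = br p) := by
      intro g hg
      simp only [Finset.mem_insert, Finset.mem_singleton] at hg
      rcases hg with rfl | rfl <;> rw [Finset.mem_filter] <;> exact ⟨by assumption, by simp [hpq]⟩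
    have h2le : 2 ≤ (S.filter (fun g => br g = br p)).card :=
      (Finset.card_pair dpq) ▸ Finset.card_le_card hsub
    have := h1 _ hm
    omega
  · have hm := mem_classSizes br S hxS
    have hev := h2 _ hm
    by_cases hpx : br p = br x
    · have hF : S.filter (fun g => br g = br x) = {p, q, x} := by
        apply Finset.Subset.antisymm
        · intro g hg
          rw [Finset.mem_filter] at hg
          obtain ⟨hgS, hgbr⟩ := hg
          rcases (hmemS g).1 hgS with rfl | rfl | rfl | rfl
          · simp
          · simp
          · simp
          · exact absurd hgbr.symm hxy
        · intro g hg
          simp only [Finset.mem_insert, Finset.mem_singleton] at hg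
          rcases hg with rfl | rfl | rfl <;> rw [Finset.mem_filter]
          · exact ⟨hp, hpx⟩
          · exact ⟨hq, hpq.trans hpx⟩
          · exact ⟨hxS, rfl⟩
      rw [hF, Finset.card_insert_of_notMem (by simp [dpq, dpx]),
        Finset.card_insert_of_notMem (by simp [dqx]), Finset.card_singleton] at hev
      exact (by decide : ¬ Even 3) hev
    · have hF : S.filter (fun g => br g = br x) = {x} := by
        apply Finset.Subset.antisymm
        · intro g hg
          rw [Finset.mem_filter] at hg
          obtain ⟨hgS, hgbr⟩ := hg
          rcases (hmemS g).1 hgS with rfl | rfl | rfl | rfl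
          · exact absurd hgbr hpx
          · exact absurd (hpq.symm.trans hgbr) hpx
          · simp
          · exact absurd hgbr.symm hxy
        · intro g hg
          simp only [Finset.mem_singleton] at hg
          subst hg
          exact Finset.mem_filter.2 ⟨hxS, rfl⟩
      rw [hF, Finset.card_singleton] at hev
      exact (by decide : ¬ Even 1) hev

/-! ### Arithmetic helper facts in `G`, proved by `decide` -/

private lemma D1 : ∀ a b u : G, a ≠ 0 → b ≠ 0 → a ≠ b → u ≠ 0 → u ≠ a → u ≠ b → u ≠ a + b →
    (a + b ≠ 0 ∧ u + a ≠ 0 ∧ u + b ≠ 0 ∧ u + (a + b) ≠ 0 ∧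
     a ≠ a + b ∧ b ≠ a + b ∧ a + b ≠ u ∧ a + b ≠ u + a ∧ a + b ≠ u + b ∧ a + b ≠ u + (a + b) ∧
     a ≠ u ∧ a ≠ u + a ∧ a ≠ u + b ∧ a ≠ u + (a + b) ∧
     b ≠ u ∧ b ≠ u + a ∧ b ≠ u + b ∧ b ≠ u + (a + b) ∧
     u ≠ u + a ∧ u ≠ u + b ∧ u ≠ u + (a + b) ∧
     u + a ≠ u + b ∧ u + a ≠ u + (a + b) ∧ u + b ≠ u + (a + b)) := by decide

private lemma HA1 : ∀ a b u g : G, a ≠ 0 → b ≠ 0 → a ≠ b → u ≠ 0 → u ≠ a → u ≠ b → u ≠ a + b →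
    (¬(g = 0 ∨ g = a + b ∨ g = u ∨ g = a + b + u) ↔
      (g = a ∨ g = b ∨ g = u + a ∨ g = u + b)) := by decide

private lemma HA2 : ∀ a b u g : G, a ≠ 0 → b ≠ 0 → a ≠ b → u ≠ 0 → u ≠ a → u ≠ b → u ≠ a + b →
    (¬(g = 0 ∨ g = a + b ∨ g = u + a ∨ g = a + b + (u + a)) ↔
      (g = a ∨ g = b ∨ g = u ∨ g = u + (a + b))) := by decide

private lemma HA3 : ∀ a b u g : G, a ≠ 0 → b ≠ 0 → a ≠ b → u ≠ 0 → u ≠ a → u ≠ b → u ≠ a + b →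
    (¬(g = 0 ∨ g = b ∨ g = u + a ∨ g = b + (u + a)) ↔
      (g = a ∨ g = a + b ∨ g = u ∨ g = u + b)) := by decide

private lemma HB : ∀ a b u g : G, a ≠ 0 → b ≠ 0 → a ≠ b → u ≠ 0 → u ≠ a → u ≠ b → u ≠ a + b →
    (¬(g = 0 ∨ g = a) ↔
      (g = b ∨ g = a + b ∨ g = u ∨ g = u + a ∨ g = u + b ∨ g = u + (a + b))) := by decide

private lemma exists_u : ∀ a b : G, a ≠ 0 → b ≠ 0 → a ≠ b →
    ∃ u : G, u ≠ 0 ∧ u ≠ a ∧ u ≠ b ∧ u ≠ a + b := by decide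

/-! ### Core argument -/

lemma core (br : G → ℕ)
    (hKlein : ∀ H : AddSubgroup G, Nat.card H = 2 →
      classSizes br (Finset.univ.filter fun g => g ∉ H) = ({1, 1, 1, 1, 1, 1} : Multiset ℕ)
        ∨ classSizes br (Finset.univ.filter fun g => g ∉ H) = ({3, 3} : Multiset ℕ)
        ∨ classSizes br (Finset.univ.filter fun g => g ∉ H) = ({2, 2, 2} : Multiset ℕ))
    (hZ2 : ∀ H : AddSubgroup G, Nat.card H = 4 →
      (∀ s ∈ classSizes br (Finset.univ.filter fun g => g ∉ H), s = 1)
        ∨ (∀ s ∈ classSizes br (Finset.univ.filter fun g => g ∉ H), Even s))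
    (a b u : G) (ha : a ≠ 0) (hb : b ≠ 0) (hab : a ≠ b)
    (hu : u ≠ 0) (hua : u ≠ a) (hub : u ≠ b) (huc : u ≠ a + b)
    (hbr : br a = br b) : False := by
  obtain ⟨n1, n2, n3, n4, n5, n6, n7, n8, n9, n10, n11, n12, n13, n14, n15, n16, n17, n18,
    n19, n20, n21, n22, n23, n24⟩ := D1 a b u ha hb hab hu hua hub huc
  -- The two order-4 subgroups whose complements contain `a` and `b`.
  have hS1 : ∀ g : G, g ∉ sub4 (a+b) u ↔ (g = a ∨ g = b ∨ g = u + a ∨ g = u + b) := by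
    intro g; rw [mem_sub4]; exact HA1 a b u g ha hb hab hu hua hub huc
  have st3 : br (u + a) = br (u + b) :=
    pairD br _ (hZ2 _ (card_sub4 n1 hu n7)) a b (u+a) (u+b) hS1 hbr.symm hab n12 n16
  have hS2 : ∀ g : G, g ∉ sub4 (a+b) (u+a) ↔ (g = a ∨ g = b ∨ g = u ∨ g = u + (a+b)) := by
    intro g; rw [mem_sub4]; exact HA2 a b u g ha hb hab hu hua hub huc
  have st2 : br u = br (u + (a + b)) :=
    pairD br _ (hZ2 _ (card_sub4 n1 n2 n8)) a b u (u+(a+b)) hS2 hbr.symm hab n11 n15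
  -- The Klein-four subcover for the subgroup `{0, a+b}`.
  have K1 := hKlein (sub2 (a+b)) (card_sub2 n1)
  have hmem1 : ∀ g : G, g ≠ 0 → g ≠ a + b →
      g ∈ (Finset.univ.filter fun g : G => g ∉ sub2 (a+b)) := by
    intro g h0 hc
    refine Finset.mem_filter.2 ⟨Finset.mem_univ _, ?_⟩
    rw [mem_sub2]; tauto
  have h4a : br a ≠ br u := by
    intro h
    exact no_big_class br _ K1 a b u (u+(a+b)) (hmem1 a ha n5) (hmem1 b hb n6)
      (hmem1 u hu (Ne.symm n7)) (hmem1 _ n4 (Ne.symm n10)) hab n11 n14 n15 n18 n21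
      hbr.symm h.symm (st2.symm.trans h.symm)
  have h4b : br a ≠ br (u + a) := by
    intro h
    exact no_big_class br _ K1 a b (u+a) (u+b) (hmem1 a ha n5) (hmem1 b hb n6)
      (hmem1 _ n2 (Ne.symm n8)) (hmem1 _ n3 (Ne.symm n9)) hab n12 n13 n16 n17 n22
      hbr.symm h.symm (st3.symm.trans h.symm)
  have h4c : br u ≠ br (u + a) := by
    intro h
    exact no_big_class br _ K1 u (u+(a+b)) (u+a) (u+b) (hmem1 u hu (Ne.symm n7))
      (hmem1 _ n4 (Ne.symm n10)) (hmem1 _ n2 (Ne.symm n8)) (hmem1 _ n3 (Ne.symm n9))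
      n21 n19 n20 (Ne.symm n23) (Ne.symm n24) n22
      st2.symm h.symm (st3.symm.trans h.symm)
  -- The Klein-four subcover for the subgroup `{0, a}` forces `br (a+b) = br b`.
  have K2 := hKlein (sub2 a) (card_sub2 ha)
  have hmem2 : ∀ g : G, g ≠ 0 → g ≠ a →
      g ∈ (Finset.univ.filter fun g : G => g ∉ sub2 a) := by
    intro g h0 hc
    refine Finset.mem_filter.2 ⟨Finset.mem_univ _, ?_⟩
    rw [mem_sub2]; tauto
  have st5 : br (a + b) = br b := by
    by_contra hcb
    have hfib : (Finset.univ.filter fun g : G => g ∉ sub2 a).filter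
        (fun g => br g = br b) = {b} := by
      apply Finset.Subset.antisymm
      · intro g hg
        rw [Finset.mem_filter] at hg
        obtain ⟨hgS, hgbr⟩ := hg
        have hgmem : ¬(g = 0 ∨ g = a) := by
          have := (Finset.mem_filter.1 hgS).2
          rw [mem_sub2] at this
          exact this
        rcases (HB a b u g ha hb hab hu hua hub huc).1 hgmem with rfl|rfl|rfl|rfl|rfl|rfl
        · simp
        · exact absurd hgbr hcb
        · exact absurd (hbr.trans hgbr.symm) h4a
        · exact absurd (hbr.trans hgbr.symm) h4b
        · exact absurd (hbr.trans (st3.trans hgbr).symm) h4b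
        · exact absurd (hbr.trans (st2.trans hgbr).symm) h4a
      · intro g hg
        simp only [Finset.mem_singleton] at hg
        rw [hg]
        exact Finset.mem_filter.2 ⟨hmem2 b hb (Ne.symm hab), rfl⟩
    exact one_and_two br _ K2 b (hmem2 b hb (Ne.symm hab)) hfib u (u+(a+b))
      (hmem2 u hu (Ne.symm n11)) (hmem2 _ n4 (Ne.symm n14)) n21 st2.symm
  -- The third order-4 subgroup: its complement contains `a` and `a+b`, which now lie
  -- on the same branch, so `u` and `u+b` lie on the same branch, a contradiction.
  have hS3 : ∀ g : G, g ∉ sub4 b (u+a) ↔ (g = a ∨ g = a + b ∨ g = u ∨ g = u + b) := by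
    intro g; rw [mem_sub4]; exact HA3 a b u g ha hb hab hu hua hub huc
  have stf : br u = br (u + b) :=
    pairD br _ (hZ2 _ (card_sub4 hb n2 n16)) a (a+b) u (u+b) hS3
      (st5.trans hbr.symm) n5 n11 n7
  exact h4c (stf.trans st3.symm)

/-- Proposition 5.5: a Hurwitz tree for a lift of a `(ℤ/2)³`-cover of type `(4,4,4)`,
such that every Klein-four subcover (of type `(4,4)`) has branch partition
`(1,1,1,1,1,1)`, `(3,3)` or `(2,2,2)` (Mitchell), and every `ℤ/2`-subcover lift is
either equidistant (all branches singletons) or has all branches of even size,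
has branch partition `(1,1,1,1,1,1,1)`: the 7 branch points are equidistant. -/
theorem type_444_equidistant
    (br : G → ℕ)
    (hKlein : ∀ H : AddSubgroup G, Nat.card H = 2 →
      classSizes br (Finset.univ.filter fun g => g ∉ H) = ({1, 1, 1, 1, 1, 1} : Multiset ℕ)
        ∨ classSizes br (Finset.univ.filter fun g => g ∉ H) = ({3, 3} : Multiset ℕ)
        ∨ classSizes br (Finset.univ.filter fun g => g ∉ H) = ({2, 2, 2} : Multiset ℕ))
    (hZ2 : ∀ H : AddSubgroup G, Nat.card H = 4 →
      (∀ s ∈ classSizes br (Finset.univ.filter fun g => g ∉ H), s = 1)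
        ∨ (∀ s ∈ classSizes br (Finset.univ.filter fun g => g ∉ H), Even s)) :
    ∀ g g' : G, g ≠ 0 → g' ≠ 0 → br g = br g' → g = g' := by
  intro g g' hg hg' hbr
  by_contra hne
  obtain ⟨u, h1, h2, h3, h4⟩ := exists_u g g' hg hg' hne
  exact core br hKlein hZ2 g g' u hg hg' hne h1 h2 h3 h4 hbr

end Stmt17
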